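/- Let (R,B) be a fusion ring and φ a fixed-point-free automorphism of B of prime order p. Then the unique ring homomorphism χ: R → ℂ satisfying χ(φ(x)) = χ(x) for all x ∈ B and positive on B is FPdim. More precisely: if χ is any character of an irreducible representation of R with χ ∘ φ = χ, then by orthogonality with FPdim one derives 1 + p·(algebraic integer) = 0, a contradiction unless χ = FPdim. -/

import Mathlib

open Finset

/-- A fusion ring with basis indexed by `Fin n`, given by its structure
constants `c`, distinguished unit basis element `one`, and duality `dual`. -/
structure FusionData (n : ℕ) where
  c : Fin n → Fin n → Fin n → ℕ
  one : Fin n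
  dual : Fin n → Fin n
  dual_dual : ∀ i, dual (dual i) = i
  c_one_left : ∀ i k, c one i k = if k = i then 1 else 0
  c_one_right : ∀ i k, c i one k = if k = i then 1 else 0
  c_dual : ∀ i j, c i j one = if j = dual i then 1 else 0
  assoc : ∀ i j l m, ∑ k, c i j k * c k l m = ∑ k, c j l k * c i k m

/-- `d` is the Frobenius–Perron dimension function: the (unique) ring
homomorphism `R → ℝ` positive on the basis. -/
def FusionData.IsFPdim {n : ℕ} (F : FusionData n) (d : Fin n → ℝ) : Prop :=
  (∀ i, 0 < d i) ∧ ∀ i j, d i * d j = ∑ k, (F.c i j k : ℝ) * d k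

/-- `φ` is a fusion-ring automorphism: a permutation of the basis fixing the
unit and preserving the structure constants. -/
def FusionData.IsAut {n : ℕ} (F : FusionData n) (φ : Equiv.Perm (Fin n)) : Prop :=
  φ F.one = F.one ∧ ∀ i j k, F.c (φ i) (φ j) (φ k) = F.c i j k

/-- `φ` is fixed-point-free: the unit is its only fixed basis element. -/
def FusionData.Fpf {n : ℕ} (F : FusionData n) (φ : Equiv.Perm (Fin n)) : Prop :=
  ∀ i, φ i = i → i = F.one

/-- A character of the fusion ring: a unital ring homomorphism `R → ℂ`,
recorded via its values on the basis. -/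
def FusionData.IsChar {n : ℕ} (F : FusionData n) (χ : Fin n → ℂ) : Prop :=
  χ F.one = 1 ∧ ∀ i j, χ i * χ j = ∑ k, (F.c i j k : ℂ) * χ k

namespace FusionData

variable {n : ℕ} (F : FusionData n)

lemma dual_one : F.dual F.one = F.one := by
  have h1 : F.c F.one (F.dual F.one) F.one = 1 := by rw [F.c_dual]; simp
  rw [F.c_one_left] at h1
  by_contra h
  rw [if_neg (fun e => h e.symm)] at h1
  simp at h1

lemma c_dual' (i j : Fin n) :
    F.c i j F.one = if i = F.dual j then 1 else 0 := by
  rw [F.c_dual]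
  by_cases h : j = F.dual i
  · rw [if_pos h, if_pos (by rw [h, F.dual_dual])]
  · rw [if_neg h, if_neg (fun e => h (by rw [e, F.dual_dual]))]

lemma cyclic (i j k : Fin n) : F.c i j k = F.c j (F.dual k) (F.dual i) := by
  have h := F.assoc i j (F.dual k) F.one
  have hL : ∑ m, F.c i j m * F.c m (F.dual k) F.one = F.c i j k := by
    have hm : ∀ m, F.c m (F.dual k) F.one = if m = k then 1 else 0 := by
      intro m
      rw [F.c_dual' m (F.dual k), F.dual_dual]
    simp only [hm, mul_ite, mul_one, mul_zero]
    simp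
  have hR : ∑ m, F.c j (F.dual k) m * F.c i m F.one = F.c j (F.dual k) (F.dual i) := by
    have hm : ∀ m, F.c i m F.one = if m = F.dual i then 1 else 0 := fun m => F.c_dual i m
    simp only [hm, mul_ite, mul_one, mul_zero]
    simp
  rw [hL, hR] at h
  exact h

/-- The key orthogonality-style identity. -/
lemma key {R : Type*} [CommRing R] {α β : Fin n → R}
    (hα : ∀ i j, α i * α j = ∑ k, (F.c i j k : R) * α k)
    (hβ : ∀ i j, β i * β j = ∑ k, (F.c i j k : R) * β k)
    (a : Fin n) :
    α a * (∑ x, α x * β (F.dual x)) = (∑ x, α x * β (F.dual x)) * β a := by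
  have LHS : α a * (∑ x, α x * β (F.dual x))
      = ∑ x, ∑ k, (F.c a x k : R) * (α k * β (F.dual x)) := by
    rw [Finset.mul_sum]
    refine Finset.sum_congr rfl fun x _ => ?_
    rw [← mul_assoc, hα a x, Finset.sum_mul]
    exact Finset.sum_congr rfl fun k _ => by ring
  have RHS : (∑ x, α x * β (F.dual x)) * β a
      = ∑ x, ∑ k, (F.c a (F.dual k) x : R) * (α x * β k) := by
    rw [Finset.sum_mul]
    refine Finset.sum_congr rfl fun x _ => ?_
    rw [mul_assoc, hβ (F.dual x) a, Finset.mul_sum]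
    refine Finset.sum_congr rfl fun k _ => ?_
    rw [F.cyclic (F.dual x) a k, F.dual_dual]
    ring
  rw [LHS, RHS, Finset.sum_comm]
  refine Finset.sum_congr rfl fun x _ => ?_
  refine Fintype.sum_bijective F.dual (Function.Involutive.bijective F.dual_dual)
    _ _ fun k => ?_
  rw [F.dual_dual]

variable {F}

lemma fpdim_unique {d d' : Fin n → ℝ} (hd : F.IsFPdim d) (hd' : F.IsFPdim d') :
    ∀ a, d' a = d a := by
  intro a
  have hk := F.key hd'.2 hd.2 a
  have hT : 0 < ∑ x, d' x * d (F.dual x) :=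
    Finset.sum_pos (fun x _ => mul_pos (hd'.1 x) (hd.1 _)) ⟨F.one, Finset.mem_univ _⟩
  rw [mul_comm (∑ x, d' x * d (F.dual x)) (d a)] at hk
  exact mul_right_cancel₀ hT.ne' hk

lemma phi_dual {φ : Equiv.Perm (Fin n)} (hA : F.IsAut φ) (i : Fin n) :
    φ (F.dual i) = F.dual (φ i) := by
  have h := hA.2 i (F.dual i) F.one
  rw [hA.1, F.c_dual, F.c_dual, if_pos rfl] at h
  by_contra hc
  rw [if_neg hc] at h
  simp at h

lemma fpdim_phi {φ : Equiv.Perm (Fin n)} (hA : F.IsAut φ) {d : Fin n → ℝ}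
    (hd : F.IsFPdim d) (i : Fin n) : d (φ i) = d i := by
  refine fpdim_unique hd ⟨fun j => hd.1 _, fun i j => ?_⟩ i
  rw [hd.2 (φ i) (φ j)]
  refine (Fintype.sum_bijective φ φ.bijective _ _ fun k => ?_).symm
  rw [hA.2]

lemma fpdim_one {d : Fin n → ℝ} (hd : F.IsFPdim d) : d F.one = 1 := by
  have h := hd.2 F.one F.one
  have h2 : ∑ k, (F.c F.one F.one k : ℝ) * d k = d F.one := by
    simp only [F.c_one_left]
    simp
  rw [h2] at h
  have h1 := hd.1 F.one
  nlinarith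

/-- Eigenvalue argument: values of a character are algebraic integers. -/
lemma isIntegral_char {α : Fin n → ℂ} (hone : α F.one = 1)
    (hα : ∀ i j, α i * α j = ∑ k, (F.c i j k : ℂ) * α k) (i : Fin n) :
    IsIntegral ℤ (α i) := by
  classical
  set M : Matrix (Fin n) (Fin n) ℤ := Matrix.of (fun j k => (F.c i j k : ℤ)) with hM
  set A : Matrix (Fin n) (Fin n) ℂ := M.map (Int.castRingHom ℂ) with hA
  refine ⟨M.charpoly, M.charpoly_monic, ?_⟩
  rw [Polynomial.eval₂_eq_eval_map]
  have hmap : M.charpoly.map (algebraMap ℤ ℂ) = A.charpoly := by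
    rw [hA, Matrix.charpoly_map]
    rfl
  rw [hmap]
  have hev : A.charpoly.eval (α i) = (Matrix.scalar (Fin n) (α i) - A).det := by
    rw [Matrix.charpoly, eval_det, Matrix.matPolyEquiv_charmatrix]
    simp
  rw [hev]
  rw [← Matrix.exists_mulVec_eq_zero_iff]
  refine ⟨α, fun h0 => one_ne_zero (by rw [← hone, h0]; rfl), ?_⟩
  funext j
  have step1 : ((Matrix.scalar (Fin n) (α i) - A).mulVec α) j
      = ∑ k, ((if j = k then α i else 0) - (F.c i j k : ℂ)) * α k := by
    simp [Matrix.mulVec, dotProduct, Matrix.sub_apply, Matrix.scalar,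
      Matrix.diagonal, hA, hM]
  have step2 : ∑ k, ((if j = k then α i else 0) - (F.c i j k : ℂ)) * α k
      = α i * α j - ∑ k, (F.c i j k : ℂ) * α k := by
    simp only [sub_mul, Finset.sum_sub_distrib]
    congr 1
    simp [ite_mul]
  rw [step1, step2, hα i j, sub_self]
  rfl

end FusionData

namespace FusionData

variable {n : ℕ} {F : FusionData n}

lemma sum_eq_one_add_p_mul {p : ℕ} (hp : p.Prime) {φ : Equiv.Perm (Fin n)}
    (hA : F.IsAut φ) (hord : orderOf φ = p) (hfpf : F.Fpf φ)
    {g : Fin n → ℂ} (hg : ∀ x, g (φ x) = g x) (hone : g F.one = 1)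
    (hint : ∀ x, IsIntegral ℤ (g x)) :
    ∃ z : ℂ, IsIntegral ℤ z ∧ ∑ x, g x = 1 + p * z := by
  classical
  set G : Subgroup (Equiv.Perm (Fin n)) := Subgroup.zpowers φ with hG
  have hzpow : ∀ (m : ℤ) (x : Fin n), g ((φ ^ m) x) = g x := by
    intro m
    induction m using Int.induction_on with
    | zero => intro x; simp
    | succ k ih =>
      intro x
      have h1 : (φ ^ ((k : ℤ) + 1)) x = (φ ^ (k : ℤ)) (φ x) := by
        rw [zpow_add_one]; rfl
      rw [h1, ih, hg]
    | pred k ih =>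
      intro x
      have h1 : (φ ^ ((-k : ℤ) - 1)) x = (φ ^ (-k : ℤ)) (φ⁻¹ x) := by
        rw [zpow_sub_one]; rfl
      rw [h1, ih, ← hg (φ⁻¹ x), Equiv.Perm.inv_def, Equiv.apply_symm_apply]
  have horb : ∀ x y : Fin n, y ∈ MulAction.orbit G x → g y = g x := by
    rintro x y ⟨h, rfl⟩
    obtain ⟨m, hm⟩ := Subgroup.mem_zpowers_iff.mp h.2
    show g ((h : Equiv.Perm (Fin n)) x) = g x
    rw [← hm]
    exact hzpow m x
  have hfix : ∀ m : ℤ, (φ ^ m) F.one = F.one := by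
    intro m
    induction m using Int.induction_on with
    | zero => simp
    | succ k ih =>
      have h1 : (φ ^ ((k : ℤ) + 1)) F.one = (φ ^ (k : ℤ)) (φ F.one) := by
        rw [zpow_add_one]; rfl
      rw [h1, hA.1, ih]
    | pred k ih =>
      have h1 : (φ ^ ((-k : ℤ) - 1)) F.one = (φ ^ (-k : ℤ)) (φ⁻¹ F.one) := by
        rw [zpow_sub_one]; rfl
      have : φ⁻¹ F.one = F.one := by
        conv_lhs => rw [← hA.1]
        exact φ.symm_apply_apply F.one
      rw [h1, this, ih]
  have horb_one : MulAction.orbit G F.one = {F.one} := by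
    apply Set.eq_singleton_iff_unique_mem.mpr
    constructor
    · exact MulAction.mem_orbit_self _
    · rintro y ⟨h, rfl⟩
      obtain ⟨m, hm⟩ := Subgroup.mem_zpowers_iff.mp h.2
      show (h : Equiv.Perm (Fin n)) F.one = F.one
      rw [← hm]
      exact hfix m
  have hcardG : Fintype.card G = p := by
    rw [← hord]
    exact Fintype.card_zpowers
  -- orbit cardinalities
  have hcard : ∀ x : Fin n, Fintype.card (MulAction.orbit G x) = 1
      ∨ Fintype.card (MulAction.orbit G x) = p := by
    intro x
    have hdvd : Fintype.card (MulAction.orbit G x) ∣ p := by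
      rw [← hcardG]
      exact Dvd.intro _ (MulAction.card_orbit_mul_card_stabilizer_eq_card_group G x)
    exact (Nat.Prime.eq_one_or_self_of_dvd hp _ hdvd)
  have hcard_one_iff : ∀ x : Fin n, Fintype.card (MulAction.orbit G x) = 1 → x = F.one := by
    intro x hx
    have hsub : Subsingleton (MulAction.orbit G x) := Fintype.card_le_one_iff_subsingleton.mp hx.le
    have h1 : (⟨x, MulAction.mem_orbit_self x⟩ : MulAction.orbit G x)
        = ⟨φ x, ⟨⟨φ, Subgroup.mem_zpowers φ⟩, rfl⟩⟩ := Subsingleton.elim _ _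
    have : x = φ x := congrArg Subtype.val h1
    exact hfpf x this.symm
  -- decompose sum over orbits
  set Ω := MulAction.orbitRel.Quotient G (Fin n) with hΩ
  letI : Fintype Ω := Fintype.ofFinite Ω
  have hconst : ∀ (ω : Ω) (y : MulAction.orbit G ω.out), g y = g ω.out :=
    fun ω y => horb _ _ y.2
  have hsum : ∑ x, g x
      = ∑ ω : Ω, (Fintype.card (MulAction.orbit G ω.out) : ℂ) * g ω.out := by
    rw [← Equiv.sum_comp (MulAction.selfEquivSigmaOrbits G (Fin n)).symm g]
    rw [← Finset.univ_sigma_univ, Finset.sum_sigma]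
    refine Finset.sum_congr rfl fun ω _ => ?_
    have : ∀ y : MulAction.orbit G ω.out,
        g ((MulAction.selfEquivSigmaOrbits G (Fin n)).symm ⟨ω, y⟩) = g ω.out := by
      intro y
      have hy : (MulAction.selfEquivSigmaOrbits G (Fin n)).symm ⟨ω, y⟩ = (y : Fin n) := rfl
      rw [hy]; exact hconst ω y
    rw [Finset.sum_congr rfl fun y _ => this y]
    simp [Finset.card_univ, mul_comm]
  set ω₁ : Ω := (Quotient.mk'' F.one : Ω) with hω₁
  have hout₁ : ω₁.out = F.one := by
    have h1 : (Quotient.mk'' ω₁.out : Ω) = Quotient.mk'' F.one := by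
      rw [Quotient.out_eq']
    have h2 : ω₁.out ∈ MulAction.orbit G F.one := by
      rw [← MulAction.orbitRel_apply (G := G)]
      exact Quotient.eq''.mp h1
    rw [horb_one] at h2
    exact h2
  have hterm₁ : (Fintype.card (MulAction.orbit G ω₁.out) : ℂ) * g ω₁.out = 1 := by
    rw [hout₁, hone, horb_one]
    simp
  refine ⟨∑ ω ∈ Finset.univ.erase ω₁, g ω.out, ?_, ?_⟩
  · exact IsIntegral.sum _ fun ω _ => hint _
  · rw [hsum, ← Finset.add_sum_erase Finset.univ _ (Finset.mem_univ ω₁), hterm₁]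
    congr 1
    rw [Finset.mul_sum]
    refine Finset.sum_congr rfl fun ω hω => ?_
    have hne : ω.out ≠ F.one := by
      intro h
      apply (Finset.mem_erase.mp hω).1
      rw [hω₁, ← Quotient.out_eq' ω, h]
    have hcp : Fintype.card (MulAction.orbit G ω.out) = p :=
      (hcard ω.out).resolve_left fun h => hne (hcard_one_iff _ h)
    rw [hcp]

end FusionData

/-- Any character of `R` fixed by a fixed-point-free automorphism of prime
order equals `FPdim`. -/
theorem stmt0 {n p : ℕ} (hp : p.Prime) (F : FusionData n)
    (φ : Equiv.Perm (Fin n)) (hA : F.IsAut φ) (hord : orderOf φ = p)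
    (hfpf : F.Fpf φ) (d : Fin n → ℝ) (hd : F.IsFPdim d)
    (χ : Fin n → ℂ) (hχ : F.IsChar χ) (hinv : ∀ i, χ (φ i) = χ i) :
    ∀ i, χ i = (d i : ℂ) := by
  intro i
  have hdc : ∀ i j, ((d i : ℂ)) * (d j : ℂ) = ∑ k, (F.c i j k : ℂ) * (d k : ℂ) := by
    intro i j
    exact_mod_cast hd.2 i j
  have hdone : ((d F.one : ℝ) : ℂ) = 1 := by
    rw [FusionData.fpdim_one hd]; norm_num
  set g : Fin n → ℂ := fun x => χ x * (d (F.dual x) : ℂ) with hgdef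
  have hg : ∀ x, g (φ x) = g x := by
    intro x
    show χ (φ x) * (d (F.dual (φ x)) : ℂ) = χ x * (d (F.dual x) : ℂ)
    rw [hinv, ← FusionData.phi_dual hA, FusionData.fpdim_phi hA hd]
  have hgone : g F.one = 1 := by
    show χ F.one * (d (F.dual F.one) : ℂ) = 1
    rw [hχ.1, F.dual_one, hdone, one_mul]
  have hgint : ∀ x, IsIntegral ℤ (g x) := by
    intro x
    exact (FusionData.isIntegral_char hχ.1 hχ.2 x).mul
      (FusionData.isIntegral_char hdone hdc (F.dual x))
  obtain ⟨z, hz, hTz⟩ := FusionData.sum_eq_one_add_p_mul hp hA hord hfpf hg hgone hgint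
  have hT0 : (∑ x, g x) ≠ 0 := by
    intro h0
    rw [h0] at hTz
    have hp0 : (p : ℂ) ≠ 0 := by
      exact_mod_cast hp.pos.ne'
    have hzval : z = ((-(1 / p) : ℚ) : ℂ) := by
      push_cast
      field_simp
      linear_combination -hTz
    have hzq : IsIntegral ℤ ((-(1 / p) : ℚ)) := by
      rw [← isIntegral_algebraMap_iff (algebraMap ℚ ℂ).injective]
      have : algebraMap ℚ ℂ (-(1 / p) : ℚ) = ((-(1 / p) : ℚ) : ℂ) := rfl
      rw [this, ← hzval]
      exact hz
    obtain ⟨y, hy⟩ := IsIntegrallyClosed.isIntegral_iff.mp hzq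
    have hyq : (y : ℚ) = -(1 / p) := hy
    have hpq0 : (p : ℚ) ≠ 0 := by exact_mod_cast hp.pos.ne'
    have hpq : ((y * p : ℤ) : ℚ) = -1 := by
      push_cast
      rw [hyq]
      field_simp
    have hyp : (y * p : ℤ) = -1 := by exact_mod_cast hpq
    have hdvd : (p : ℤ) ∣ 1 := ⟨-y, by linarith⟩
    have hle : (p : ℤ) ≤ 1 := Int.le_of_dvd one_pos hdvd
    have := hp.two_le
    omega
  have hk := F.key hχ.2 hdc i
  rw [mul_comm (∑ x, χ x * (d (F.dual x) : ℂ)) ((d i : ℂ))] at hk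
  exact mul_right_cancel₀ hT0 hk
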